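/- Let m ≥ 1 be an integer and let (X,d) be a finite ultrametric space with |C(X)| = m, where C(X) is the center of distances of (X,d). Then |X| ≥ 2^{m-1}. -/

import Mathlib

/-- The center of distances of a metric space. -/
def centerOfDistances (X : Type*) [MetricSpace X] : Set ℝ :=
  {t : ℝ | ∀ p : X, ∃ x : X, dist p x = t}

private lemma key_ball_lemma {X : Type*} [MetricSpace X] [Fintype X] [IsUltrametricDist X]
    (l : List ℝ) : ∀ (t : ℝ), (t :: l).Pairwise (· > ·) →
    (∀ s ∈ t :: l, s ∈ centerOfDistances X ∧ 0 ≤ s) →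
    ∀ p : X, 2 ^ l.length ≤ (Finset.univ.filter (fun y => dist p y ≤ t)).card := by
  classical
  induction l with
  | nil =>
    intro t _ hmem p
    simp only [List.length_nil, pow_zero, Finset.one_le_card]
    exact ⟨p, by simpa [dist_self] using (hmem t (by simp)).2⟩
  | cons t' rest ih =>
    intro t hsort hmem p
    have htt' : t' < t := (List.pairwise_cons.mp hsort).1 t' (by simp)
    obtain ⟨x, hx⟩ := (hmem t (by simp)).1 p
    set A := Finset.univ.filter (fun y => dist p y ≤ t') with hA
    set B := Finset.univ.filter (fun y => dist x y ≤ t') with hB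
    have hsort' : (t' :: rest).Pairwise (· > ·) := (List.pairwise_cons.mp hsort).2
    have hmem' : ∀ s ∈ t' :: rest, s ∈ centerOfDistances X ∧ 0 ≤ s := by
      intro s hs; exact hmem s (List.mem_cons_of_mem _ hs)
    have hAcard := ih t' hsort' hmem' p
    have hBcard := ih t' hsort' hmem' x
    have hdisj : Disjoint A B := by
      rw [Finset.disjoint_left]
      intro y hyA hyB
      simp only [hA, hB, Finset.mem_filter] at hyA hyB
      have : dist p x ≤ max (dist p y) (dist y x) := IsUltrametricDist.dist_triangle_max p y x
      rw [hx] at this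
      have h2 : dist y x ≤ t' := by
        have := hyB.2
        first
        | exact this
        | rwa [dist_comm] at this
      have := this.trans (max_le hyA.2 h2)
      linarith
    have hsub : A ∪ B ⊆ Finset.univ.filter (fun y => dist p y ≤ t) := by
      intro y hy
      simp only [Finset.mem_union, hA, hB, Finset.mem_filter] at hy
      simp only [Finset.mem_filter, Finset.mem_univ, true_and]
      rcases hy with ⟨_, h⟩ | ⟨_, h⟩
      · linarith
      · have : dist p y ≤ max (dist p x) (dist x y) := IsUltrametricDist.dist_triangle_max p x y
        rw [hx] at this
        exact this.trans (max_le le_rfl (h.trans htt'.le))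
    calc 2 ^ (t' :: rest).length = 2 ^ rest.length + 2 ^ rest.length := by
          simp [List.length_cons, pow_succ, mul_two]
      _ ≤ A.card + B.card := Nat.add_le_add hAcard hBcard
      _ = (A ∪ B).card := (Finset.card_union_of_disjoint hdisj).symm
      _ ≤ _ := Finset.card_le_card hsub

/-- If `|C(X)| = m ≥ 1` for a finite ultrametric space `X`, then `|X| ≥ 2^(m-1)`. -/
theorem card_ge_of_card_center {X : Type*} [MetricSpace X] [Fintype X]
    [IsUltrametricDist X] (m : ℕ) (hm : 1 ≤ m)
    (hC : (centerOfDistances X).ncard = m) :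
    2 ^ (m - 1) ≤ Fintype.card X := by
  have hfin : (centerOfDistances X).Finite := by
    by_contra h
    rw [Set.Infinite.ncard (by simpa using h)] at hC
    omega
  -- X is nonempty
  cases isEmpty_or_nonempty X with
  | inl he =>
    exfalso
    have : centerOfDistances X = Set.univ := by
      ext t
      simp only [Set.mem_univ, iff_true, centerOfDistances, Set.mem_setOf_eq]
      intro p
      exact isEmptyElim p
    rw [this] at hfin
    exact Set.infinite_univ hfin
  | inr hne =>
    obtain ⟨p⟩ := hne
    have hnonneg : ∀ s ∈ centerOfDistances X, 0 ≤ s := by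
      intro s hs
      obtain ⟨x, hx⟩ := hs p
      rw [← hx]; exact dist_nonneg
    set F := hfin.toFinset with hF
    have hFcard : F.card = m := by rw [hF, ← Set.ncard_eq_toFinset_card _ hfin]; exact hC
    set l := F.sort (· ≥ ·) with hl
    have hlen : l.length = m := by rw [hl, Finset.length_sort]; exact hFcard
    have hlsort : l.Pairwise (· > ·) := (Finset.sortedGT_sort F).pairwise
    have hlmem : ∀ s ∈ l, s ∈ centerOfDistances X ∧ 0 ≤ s := by
      intro s hs
      rw [hl, Finset.mem_sort] at hs
      rw [hF, Set.Finite.mem_toFinset] at hs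
      exact ⟨hs, hnonneg s hs⟩
    obtain ⟨t, rest, hcons⟩ : ∃ t rest, l = t :: rest := by
      have hlne : l ≠ [] := by
        intro h
        rw [h] at hlen
        simp at hlen
        omega
      rcases List.exists_cons_of_ne_nil hlne with ⟨a, b, hab⟩
      exact ⟨a, b, hab⟩
    rw [hcons] at hlsort hlmem hlen
    have := key_ball_lemma rest t hlsort hlmem p
    have hrest : rest.length = m - 1 := by simp at hlen; omega
    rw [hrest] at this
    calc 2 ^ (m - 1) ≤ (Finset.univ.filter (fun y => dist p y ≤ t)).card := this
      _ ≤ Finset.univ.card := Finset.card_filter_le _ _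
      _ = Fintype.card X := rfl
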